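/- Let x, y, z ∈ ℍⁿ with z ≠ x and z ≠ y, and let x', y' be the midpoints of the segments zx and zy. If the angle ∠xzy equals 2π/3, then dist(x', y') < (1/2)·dist(x, y). -/

import Mathlib

open Real
open RealInnerProductSpace

/-- Inverse hyperbolic cosine. -/
noncomputable def arcosh (x : ℝ) : ℝ := Real.log (x + Real.sqrt (x ^ 2 - 1))

/-- A point of hyperbolic `n`-space in the Poincaré ball model. -/
abbrev HypSpace (n : ℕ) := {p : EuclideanSpace ℝ (Fin n) // ‖p‖ < 1}

/-- The hyperbolic distance in the Poincaré ball model. -/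
noncomputable def hDist {n : ℕ} (x y : HypSpace n) : ℝ :=
  _root_.arcosh (1 + 2 * ‖(x : EuclideanSpace ℝ (Fin n)) - (y : EuclideanSpace ℝ (Fin n))‖ ^ 2 /
    ((1 - ‖(x : EuclideanSpace ℝ (Fin n))‖ ^ 2) * (1 - ‖(y : EuclideanSpace ℝ (Fin n))‖ ^ 2)))

/-- `m` is the midpoint of the geodesic segment from `p` to `q`:  it lies on the segment
(distances add up) and divides it into two equal halves. -/
def IsHypMidpoint {n : ℕ} (p m q : HypSpace n) : Prop :=
  hDist p m = hDist p q / 2 ∧ hDist m q = hDist p q / 2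


/-- The hyperbolic angle `∠ x z y` at the vertex `z`, defined via the hyperbolic
law of cosines. -/
noncomputable def hAngle {n : ℕ} (x z y : HypSpace n) : ℝ :=
  Real.arccos ((Real.cosh (hDist z x) * Real.cosh (hDist z y) - Real.cosh (hDist x y)) /
    (Real.sinh (hDist z x) * Real.sinh (hDist z y)))

lemma cosh_arcosh {t : ℝ} (ht : 1 ≤ t) : Real.cosh (_root_.arcosh t) = t := by
  have h0 : (0:ℝ) ≤ t^2 - 1 := by nlinarith
  have hs : Real.sqrt (t^2-1) ^ 2 = t^2 - 1 := Real.sq_sqrt h0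
  have hsp : (0:ℝ) ≤ Real.sqrt (t^2-1) := Real.sqrt_nonneg _
  have hpos : 0 < t + Real.sqrt (t^2-1) := by nlinarith
  rw [_root_.arcosh, Real.cosh_log hpos]
  field_simp
  nlinarith

lemma arcosh_nonneg {t : ℝ} (ht : 1 ≤ t) : 0 ≤ _root_.arcosh t :=
  Real.log_nonneg (by linarith [Real.sqrt_nonneg (t^2-1)])

lemma arcosh_pos {t : ℝ} (ht : 1 < t) : 0 < _root_.arcosh t :=
  Real.log_pos (by linarith [Real.sqrt_nonneg (t^2-1)])

variable {n : ℕ}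

lemma den_pos (u : HypSpace n) : 0 < 1 - ‖(u : EuclideanSpace ℝ (Fin n))‖^2 := by
  nlinarith [u.2, norm_nonneg (u : EuclideanSpace ℝ (Fin n))]

noncomputable def tL (u : HypSpace n) : ℝ :=
  (1 + ‖(u : EuclideanSpace ℝ (Fin n))‖^2) / (1 - ‖(u : EuclideanSpace ℝ (Fin n))‖^2)

noncomputable def vL (u : HypSpace n) : EuclideanSpace ℝ (Fin n) :=
  (2 / (1 - ‖(u : EuclideanSpace ℝ (Fin n))‖^2)) • (u : EuclideanSpace ℝ (Fin n))

lemma one_le_F (u v : HypSpace n) :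
    1 ≤ 1 + 2 * ‖(u : EuclideanSpace ℝ (Fin n)) - (v : EuclideanSpace ℝ (Fin n))‖ ^ 2 /
      ((1 - ‖(u : EuclideanSpace ℝ (Fin n))‖ ^ 2) * (1 - ‖(v : EuclideanSpace ℝ (Fin n))‖ ^ 2)) := by
  have := den_pos u; have := den_pos v
  have h : 0 ≤ 2 * ‖(u : EuclideanSpace ℝ (Fin n)) - (v : EuclideanSpace ℝ (Fin n))‖ ^ 2 /
      ((1 - ‖(u : EuclideanSpace ℝ (Fin n))‖ ^ 2) * (1 - ‖(v : EuclideanSpace ℝ (Fin n))‖ ^ 2)) := by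
    positivity
  linarith

lemma cosh_hDist (u v : HypSpace n) :
    Real.cosh (hDist u v) = 1 + 2 * ‖(u : EuclideanSpace ℝ (Fin n)) - (v : EuclideanSpace ℝ (Fin n))‖ ^ 2 /
      ((1 - ‖(u : EuclideanSpace ℝ (Fin n))‖ ^ 2) * (1 - ‖(v : EuclideanSpace ℝ (Fin n))‖ ^ 2)) :=
  _root_.cosh_arcosh (one_le_F u v)

lemma hDist_nonneg (u v : HypSpace n) : 0 ≤ hDist u v := _root_.arcosh_nonneg (one_le_F u v)

lemma hDist_pos {u v : HypSpace n} (h : u ≠ v) : 0 < hDist u v := by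
  have hne : (u : EuclideanSpace ℝ (Fin n)) ≠ (v : EuclideanSpace ℝ (Fin n)) :=
    fun hh => h (Subtype.coe_injective hh)
  have hnorm : 0 < ‖(u : EuclideanSpace ℝ (Fin n)) - (v : EuclideanSpace ℝ (Fin n))‖ :=
    norm_pos_iff.mpr (sub_ne_zero.mpr hne)
  apply _root_.arcosh_pos
  have := den_pos u; have := den_pos v
  have h2 : 0 < 2 * ‖(u : EuclideanSpace ℝ (Fin n)) - (v : EuclideanSpace ℝ (Fin n))‖ ^ 2 /
      ((1 - ‖(u : EuclideanSpace ℝ (Fin n))‖ ^ 2) * (1 - ‖(v : EuclideanSpace ℝ (Fin n))‖ ^ 2)) := by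
    positivity
  linarith

lemma pair_eq (u v : HypSpace n) :
    tL u * tL v - ⟪vL u, vL v⟫ = Real.cosh (hDist u v) := by
  rw [cosh_hDist]
  have hu := den_pos u; have hv := den_pos v
  have hexp : ‖(u : EuclideanSpace ℝ (Fin n)) - (v : EuclideanSpace ℝ (Fin n))‖^2
      = ‖(u : EuclideanSpace ℝ (Fin n))‖^2 - 2*⟪(u : EuclideanSpace ℝ (Fin n)), (v : EuclideanSpace ℝ (Fin n))⟫ + ‖(v : EuclideanSpace ℝ (Fin n))‖^2 :=
    norm_sub_sq_real _ _
  rw [tL, tL, vL, vL, real_inner_smul_left, real_inner_smul_right, hexp]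
  field_simp
  ring

lemma pair_self (u : HypSpace n) : tL u ^ 2 - ‖vL u‖^2 = 1 := by
  have hu := den_pos u
  have : ‖vL u‖^2 = ⟪vL u, vL u⟫ := (real_inner_self_eq_norm_sq _).symm
  rw [this, tL, vL, real_inner_smul_left, real_inner_smul_right, real_inner_self_eq_norm_sq]
  field_simp
  ring

lemma mid_rep (T1 T2 T3 C : ℝ) (V1 V2 V3 : EuclideanSpace ℝ (Fin n))
    (h1 : T1^2 - ‖V1‖^2 = 1) (h2 : T2^2 - ‖V2‖^2 = 1) (h3 : T3^2 - ‖V3‖^2 = 1)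
    (hC : 0 < C)
    (p12 : T1*T2 - ⟪V1, V2⟫ = C) (p23 : T2*T3 - ⟪V2, V3⟫ = C)
    (p13 : T1*T3 - ⟪V1, V3⟫ = 2*C^2 - 1) :
    T2 = (T1+T3)/(2*C) ∧ V2 = (1/(2*C)) • (V1+V3) := by
  set wt : ℝ := T2 - (T1+T3)/(2*C) with hwt
  set wv : EuclideanSpace ℝ (Fin n) := V2 - (1/(2*C)) • (V1+V3) with hwv
  have e11 : ⟪V1, V1⟫ = T1^2 - 1 := by rw [real_inner_self_eq_norm_sq]; linarith
  have e22 : ⟪V2, V2⟫ = T2^2 - 1 := by rw [real_inner_self_eq_norm_sq]; linarith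
  have e33 : ⟪V3, V3⟫ = T3^2 - 1 := by rw [real_inner_self_eq_norm_sq]; linarith
  have e12 : ⟪V1, V2⟫ = T1*T2 - C := by linarith
  have e21 : ⟪V2, V1⟫ = T1*T2 - C := by rw [real_inner_comm]; linarith
  have e23 : ⟪V2, V3⟫ = T2*T3 - C := by linarith
  have e32 : ⟪V3, V2⟫ = T2*T3 - C := by rw [real_inner_comm]; linarith
  have e13 : ⟪V1, V3⟫ = T1*T3 - (2*C^2 - 1) := by linarith
  have e31 : ⟪V3, V1⟫ = T1*T3 - (2*C^2 - 1) := by rw [real_inner_comm]; linarith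
  have hsq : ⟪wv, wv⟫ = wt^2 := by
    simp only [hwv, inner_sub_left, inner_sub_right, inner_add_left, inner_add_right,
      real_inner_smul_left, real_inner_smul_right, e11, e22, e33, e12, e21, e23, e32, e13, e31]
    rw [hwt]
    field_simp
    ring
  have hor : ⟪wv, V1⟫ = wt * T1 := by
    simp only [hwv, inner_sub_left, inner_add_left, real_inner_smul_left,
      e11, e21, e31]
    rw [hwt]
    field_simp
    ring
  have hcs := real_inner_mul_inner_self_le wv V1
  rw [hor, hsq, e11] at hcs
  have hwt0 : wt = 0 := by nlinarith [sq_nonneg wt]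
  have hwv0 : wv = 0 := by
    have : ⟪wv, wv⟫ = 0 := by rw [hsq, hwt0]; ring
    exact inner_self_eq_zero.mp this
  constructor
  · have := hwt0
    rw [hwt] at this
    field_simp at this
    field_simp
    linarith
  · have := hwv0
    rw [hwv, sub_eq_zero] at this
    exact this

set_option maxHeartbeats 1000000 in
theorem midpoint_dist_lt_half_of_angle_two_pi_div_three {n : ℕ} (x y z x' y' : HypSpace n)
    (hzx : z ≠ x) (hzy : z ≠ y)
    (hx' : IsHypMidpoint z x' x) (hy' : IsHypMidpoint z y' y)
    (hangle : hAngle x z y = 2 * Real.pi / 3) :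
    hDist x' y' < (1 / 2) * hDist x y := by
  have ha : 0 < hDist z x := hDist_pos hzx
  have hb : 0 < hDist z y := hDist_pos hzy
  set a := hDist z x with hadef
  set b := hDist z y with hbdef
  set c := hDist x y with hcdef
  have hsa : 0 < Real.sinh a := Real.sinh_pos_iff.mpr ha
  have hsb : 0 < Real.sinh b := Real.sinh_pos_iff.mpr hb
  -- extract cos of angle
  have hpi := Real.pi_pos
  rw [hAngle] at hangle
  set t := (Real.cosh a * Real.cosh b - Real.cosh c) / (Real.sinh a * Real.sinh b) with htdef
  have ht1 : -1 ≤ t := by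
    by_contra h
    push_neg at h
    have : Real.arccos t = Real.pi := Real.arccos_eq_pi.mpr h.le
    rw [hangle] at this
    linarith
  have ht2 : t ≤ 1 := by
    by_contra h
    push_neg at h
    have : Real.arccos t = 0 := Real.arccos_eq_zero.mpr h.le
    rw [hangle] at this
    linarith
  have hcosval : Real.cos (2 * Real.pi / 3) = -(1/2) := by
    rw [show (2 * Real.pi / 3 : ℝ) = Real.pi - Real.pi/3 by ring, Real.cos_pi_sub,
      Real.cos_pi_div_three]
  have htval : t = -(1/2) := by
    rw [← Real.cos_arccos ht1 ht2, hangle, hcosval]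
  have hc : Real.cosh c = Real.cosh a * Real.cosh b + Real.sinh a * Real.sinh b / 2 := by
    rw [htdef] at htval
    field_simp at htval
    linarith
  -- midpoint representations
  set Ca := Real.cosh (a/2) with hCadef
  set Cb := Real.cosh (b/2) with hCbdef
  set Sa := Real.sinh (a/2) with hSadef
  set Sb := Real.sinh (b/2) with hSbdef
  have hCa : 0 < Ca := by rw [hCadef]; exact Real.cosh_pos _
  have hCb : 0 < Cb := by rw [hCbdef]; exact Real.cosh_pos _
  have hSapos : 0 < Sa := Real.sinh_pos_iff.mpr (by linarith)
  have hSbpos : 0 < Sb := Real.sinh_pos_iff.mpr (by linarith)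
  have hcosha : Real.cosh a = 2*Ca^2 - 1 := by
    rw [show a = 2*(a/2) by ring, Real.cosh_two_mul, hCadef, Real.cosh_sq]; ring
  have hcoshb : Real.cosh b = 2*Cb^2 - 1 := by
    rw [show b = 2*(b/2) by ring, Real.cosh_two_mul, hCbdef, Real.cosh_sq]; ring
  have hsinha : Real.sinh a = 2*Sa*Ca := by
    rw [show a = 2*(a/2) by ring, Real.sinh_two_mul]
  have hsinhb : Real.sinh b = 2*Sb*Cb := by
    rw [show b = 2*(b/2) by ring, Real.sinh_two_mul]
  have px1 : tL z * tL x' - ⟪vL z, vL x'⟫ = Ca := by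
    rw [pair_eq, hx'.1]
  have px2 : tL x' * tL x - ⟪vL x', vL x⟫ = Ca := by
    rw [pair_eq, hx'.2]
  have px3 : tL z * tL x - ⟪vL z, vL x⟫ = 2*Ca^2 - 1 := by
    rw [pair_eq, ← hadef, hcosha]
  obtain ⟨hxt, hxv⟩ := mid_rep (tL z) (tL x') (tL x) Ca (vL z) (vL x') (vL x)
    (pair_self z) (pair_self x') (pair_self x) hCa px1 px2 px3
  have py1 : tL z * tL y' - ⟪vL z, vL y'⟫ = Cb := by
    rw [pair_eq, hy'.1]
  have py2 : tL y' * tL y - ⟪vL y', vL y⟫ = Cb := by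
    rw [pair_eq, hy'.2]
  have py3 : tL z * tL y - ⟪vL z, vL y⟫ = 2*Cb^2 - 1 := by
    rw [pair_eq, ← hbdef, hcoshb]
  obtain ⟨hyt, hyv⟩ := mid_rep (tL z) (tL y') (tL y) Cb (vL z) (vL y') (vL y)
    (pair_self z) (pair_self y') (pair_self y) hCb py1 py2 py3
  -- compute cosh of hDist x' y'
  have ezz : ⟪vL z, vL z⟫ = tL z^2 - 1 := by
    rw [real_inner_self_eq_norm_sq]
    have := pair_self z; linarith
  have ezy : ⟪vL z, vL y⟫ = tL z * tL y - (2*Cb^2 - 1) := by linarith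
  have exz : ⟪vL x, vL z⟫ = tL z * tL x - (2*Ca^2 - 1) := by
    rw [real_inner_comm]; linarith
  have exy : ⟪vL x, vL y⟫ = tL x * tL y - Real.cosh c := by
    have := pair_eq x y; rw [← hcdef] at this; linarith
  have hPval : Real.cosh (hDist x' y') = (1 + (2*Ca^2-1) + (2*Cb^2-1) + Real.cosh c) / (4*Ca*Cb) := by
    rw [← pair_eq, hxt, hxv, hyt, hyv]
    simp only [inner_smul_left, inner_smul_right, inner_add_left, inner_add_right,
      real_inner_smul_left, real_inner_smul_right, ezz, ezy, exz, exy, conj_trivial]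
    field_simp
    ring
  have hval2 : Real.cosh (hDist x' y') = Ca*Cb + Sa*Sb/2 := by
    rw [hPval, hc, hcosha, hcoshb, hsinha, hsinhb]
    field_simp
    ring
  -- final inequality
  have hcoshc : Real.cosh c = 2*Real.cosh (c/2)^2 - 1 := by
    have h1 := Real.cosh_two_mul (c/2)
    have h2 := Real.cosh_sq_sub_sinh_sq (c/2)
    rw [show 2*(c/2) = c by ring] at h1
    linarith
  have hCa2 : Ca^2 = Sa^2 + 1 := by rw [hCadef, hSadef, Real.cosh_sq]
  have hCb2 : Cb^2 = Sb^2 + 1 := by rw [hCbdef, hSbdef, Real.cosh_sq]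
  have hsqlt : (Ca*Cb + Sa*Sb/2)^2 < Real.cosh (c/2)^2 := by
    have hkey : Real.cosh (c/2)^2 - (Ca*Cb + Sa*Sb/2)^2 = 3/4*(Sa^2*Sb^2) := by
      have h : Real.cosh (c/2)^2 = ((2*Ca^2-1)*(2*Cb^2-1) + (2*Sa*Ca)*((2*Sb*Cb))/2 + 1)/2 := by
        rw [← hsinha, ← hsinhb, ← hcosha, ← hcoshb, ← hc]
        linarith [hcoshc]
      rw [h]
      linear_combination (Cb^2-1)*hCa2 + Sa^2*hCb2
    have hpos : 0 < Sa^2*Sb^2 := mul_pos (pow_pos hSapos 2) (pow_pos hSbpos 2)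
    linarith
  have hlt : Real.cosh (hDist x' y') < Real.cosh (c/2) := by
    rw [hval2]
    exact lt_of_pow_lt_pow_left₀ 2 (Real.cosh_pos (x := c/2)).le hsqlt
  rw [Real.cosh_lt_cosh] at hlt
  have h1 := le_abs_self (hDist x' y')
  have h2 : |c/2| = c/2 := abs_of_nonneg (by linarith [hDist_nonneg x y])
  rw [h2] at hlt
  linarith [lt_of_le_of_lt h1 hlt]
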